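/- The assignment γ ↦ L_γ makes the graded space Ω^• of Kähler differential forms of A a graded Lie algebra module over the polyvector fields with the Schouten–Nijenhuis bracket: for all γ₁ ∈ Λ^{k₁+1}_A Der(A) and γ₂ ∈ Λ^{k₂+1}_A Der(A), L_{γ₁}∘L_{γ₂} − (−1)^{k₁k₂} L_{γ₂}∘L_{γ₁} = L_{[γ₁,γ₂]_SN} as operators on Ω^•. -/

import Mathlib

open scoped BigOperators

set_option synthInstance.maxHeartbeats 1000000
set_option maxHeartbeats 1000000

/-- The polynomial algebra `A = ℝ[x₁,…,x_d]`. -/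
abbrev PA (d : ℕ) := MvPolynomial (Fin d) ℝ

/-- The `A`-module `Ω¹ = Ω_{A/ℝ}` of Kähler differentials. -/
abbrev KD (d : ℕ) := KaehlerDifferential ℝ (PA d)

/-- The exterior algebra `Λ_A Ω¹`, containing the forms `Ω^n = Λ^n_A Ω¹` as the
submodules `⋀[A]^n Ω¹`. -/
abbrev FormAlg (d : ℕ) := ExteriorAlgebra (PA d) (KD d)

/-- The `A`-module `Der(A)` of `ℝ`-linear derivations of `A`. -/
abbrev DerA (d : ℕ) := Derivation ℝ (PA d) (PA d)

/-- The module `Λ^m_A Der(A)` of polyvector fields. -/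
noncomputable abbrev PolyVec (d m : ℕ) :=
  (⋀[PA d]^m (DerA d) : Submodule (PA d) (ExteriorAlgebra (PA d) (DerA d)))

/-- A decomposable element `u 0 ∧ ⋯ ∧ u (m-1)` of the `m`-th exterior power `Λ^m_R M`. -/
def wedgeDec (R M : Type) [CommRing R] [AddCommGroup M] [Module R M] (m : ℕ)
    (u : Fin m → M) : (⋀[R]^m M : Submodule R (ExteriorAlgebra R M)) :=
  ⟨ExteriorAlgebra.ιMulti R m u,
    ExteriorAlgebra.ιMulti_range R m (Set.mem_range_self u)⟩

namespace CartanAux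

variable {d : ℕ}

/-- `d b` as a 1-form in the exterior algebra. -/
noncomputable def eD (b : PA d) : FormAlg d :=
  ExteriorAlgebra.ι (PA d) (KaehlerDifferential.D ℝ (PA d) b)

section maps
variable {f : FormAlg d → FormAlg d}

lemma map_zero' (hf : ∀ x y, f (x + y) = f x + f y) : f 0 = 0 := (AddMonoidHom.mk' f hf).map_zero
lemma map_neg' (hf : ∀ x y, f (x + y) = f x + f y) (x) : f (-x) = - f x := (AddMonoidHom.mk' f hf).map_neg x
lemma map_sub' (hf : ∀ x y, f (x + y) = f x + f y) (x y) : f (x - y) = f x - f y := (AddMonoidHom.mk' f hf).map_sub x y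
lemma map_zsmul' (hf : ∀ x y, f (x + y) = f x + f y) (c : ℤ) (x) : f (c • x) = c • f x :=
  (AddMonoidHom.mk' f hf).map_zsmul c x
lemma map_listsum (hf : ∀ x y, f (x + y) = f x + f y) (l : List (FormAlg d)) : f l.sum = (l.map f).sum :=
  map_list_sum (AddMonoidHom.mk' f hf) l
lemma map_finsum (hf : ∀ x y, f (x + y) = f x + f y) {s : Finset ℕ} (g : ℕ → FormAlg d) :
    f (∑ i ∈ s, g i) = ∑ i ∈ s, f (g i) :=
  map_sum (AddMonoidHom.mk' f hf) g s
end maps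

lemma expow (n : ℕ) : (⋀[PA d]^n (KD d) : Submodule (PA d) (FormAlg d))
    = (LinearMap.range (ExteriorAlgebra.ι (PA d) : KD d →ₗ[PA d] FormAlg d)) ^ n := rfl

lemma mem_deg0 (a : PA d) :
    algebraMap (PA d) (FormAlg d) a ∈ ⋀[PA d]^0 (KD d) := by
  rw [expow, pow_zero]
  exact Submodule.mem_one.2 ⟨a, rfl⟩

lemma one_mem_deg0 : (1 : FormAlg d) ∈ ⋀[PA d]^0 (KD d) := by
  simpa using mem_deg0 (1 : PA d)

lemma mem_deg1 (ω : KD d) :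
    ExteriorAlgebra.ι (PA d) ω ∈ ⋀[PA d]^1 (KD d) := by
  rw [expow, pow_one]
  exact LinearMap.mem_range_self _ ω

lemma eD_mem_deg1 (b : PA d) : (eD b : FormAlg d) ∈ ⋀[PA d]^1 (KD d) := mem_deg1 _

lemma alg_mul_eq_smul (a : PA d) (x : FormAlg d) :
    algebraMap (PA d) (FormAlg d) a * x = a • x := (Algebra.smul_def a x).symm

/-- Homogeneous induction principle for the exterior algebra of Kähler differentials. -/
lemma homog_ind (P : ℕ → FormAlg d → Prop)
    (h0 : ∀ a : PA d, P 0 (algebraMap (PA d) (FormAlg d) a))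
    (hzero : ∀ n, P n 0)
    (hadd : ∀ n x y, P n x → P n y → P n (x + y))
    (hsmul : ∀ n (a : PA d) x, P n x → P n (a • x))
    (hstep : ∀ n (b : PA d) (y : FormAlg d), y ∈ ⋀[PA d]^n (KD d) → P n y →
      P (n+1) (eD b * y)) :
    ∀ n x, x ∈ ⋀[PA d]^n (KD d) → P n x := by
  intro n
  induction n with
  | zero =>
    intro x hx
    rw [expow, pow_zero] at hx
    obtain ⟨a, rfl⟩ := Submodule.mem_one.1 hx
    exact h0 a
  | succ n ih =>
    intro x hx
    rw [expow, pow_succ'] at hx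
    refine Submodule.mul_induction_on hx ?_ (fun a b ha hb => hadd _ _ _ ha hb)
    rintro m hm y hy
    obtain ⟨ω, rfl⟩ := hm
    -- expand ω along the span of the range of D
    have hω : ω ∈ Submodule.span (PA d)
        (Set.range (KaehlerDifferential.D ℝ (PA d))) := by
      rw [KaehlerDifferential.span_range_derivation]; trivial
    induction hω using Submodule.span_induction with
    | mem ω' hω' =>
      obtain ⟨b, rfl⟩ := hω'
      exact hstep n b y hy (ih y hy)
    | zero => simpa using hzero (n+1)
    | add ω₁ ω₂ _ _ hP₁ hP₂ =>
      rw [map_add, add_mul]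
      exact hadd _ _ _ hP₁ hP₂
    | smul a ω' _ hP =>
      rw [map_smul, smul_mul_assoc]
      exact hsmul _ a _ hP

/-- Globalization: a predicate additive and true on homogeneous elements is true. -/
lemma global (P : FormAlg d → Prop) (h0 : P 0)
    (hadd : ∀ a b, P a → P b → P (a + b))
    (hhom : ∀ n x, x ∈ ⋀[PA d]^n (KD d) → P x) : ∀ x, P x := by
  intro x
  letI : ∀ (i : ℕ) (y : (⋀[PA d]^i (KD d) : Submodule (PA d) (FormAlg d))),
      Decidable (y ≠ 0) := fun _ _ => Classical.propDecidable _
  have hx := DirectSum.sum_support_decompose (fun i : ℕ => ⋀[PA d]^i (KD d)) x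
  rw [← hx]
  apply Finset.sum_induction _ P hadd h0
  intro i _
  exact hhom i _ (SetLike.coe_mem _)

end CartanAux
namespace CartanAux

/-- Bundled hypotheses on the de Rham differential and contractions. -/
structure Setup (d : ℕ) where
  dR : FormAlg d → FormAlg d
  ctr : DerA d → FormAlg d → FormAlg d
  dR_add : ∀ x y, dR (x + y) = dR x + dR y
  dR_D : ∀ a : PA d, dR (algebraMap (PA d) (FormAlg d) a)
      = ExteriorAlgebra.ι (PA d) (KaehlerDifferential.D ℝ (PA d) a)
  dR_sq : ∀ x, dR (dR x) = 0
  dR_leib : ∀ (n : ℕ) (x y : FormAlg d), x ∈ ⋀[PA d]^n (KD d) →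
      dR (x * y) = dR x * y + ((-1 : ℤ) ^ n) • (x * dR y)
  ctr_add : ∀ u x y, ctr u (x + y) = ctr u x + ctr u y
  ctr_smul : ∀ u (a : PA d) x, ctr u (a • x) = a • ctr u x
  ctr_d : ∀ (u : DerA d) (a : PA d),
      ctr u (ExteriorAlgebra.ι (PA d) (KaehlerDifferential.D ℝ (PA d) a))
        = algebraMap (PA d) (FormAlg d) (u a)
  ctr_leib : ∀ (u : DerA d) (n : ℕ) (x y : FormAlg d), x ∈ ⋀[PA d]^n (KD d) →
      ctr u (x * y) = ctr u x * y + ((-1 : ℤ) ^ n) • (x * ctr u y)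

namespace Setup

variable {d : ℕ} (S : Setup d)

lemma dR_sub (x y) : S.dR (x - y) = S.dR x - S.dR y := map_sub' S.dR_add x y
lemma dR_zero : S.dR 0 = 0 := map_zero' S.dR_add
lemma dR_neg (x) : S.dR (-x) = - S.dR x := map_neg' S.dR_add x
lemma dR_zsmul (c : ℤ) (x) : S.dR (c • x) = c • S.dR x := map_zsmul' S.dR_add c x
lemma ctr_sub (u) (x y) : S.ctr u (x - y) = S.ctr u x - S.ctr u y :=
  map_sub' (S.ctr_add u) x y
lemma ctr_zero (u) : S.ctr u 0 = 0 := map_zero' (S.ctr_add u)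
lemma ctr_neg (u) (x) : S.ctr u (-x) = - S.ctr u x := map_neg' (S.ctr_add u) x
lemma ctr_zsmul (u) (c : ℤ) (x) : S.ctr u (c • x) = c • S.ctr u x :=
  map_zsmul' (S.ctr_add u) c x

lemma ctr_one (u) : S.ctr u 1 = 0 := by
  have h := S.ctr_leib u 0 1 1 one_mem_deg0
  simp only [mul_one, one_mul, pow_zero, one_smul] at h
  exact left_eq_add.mp h

lemma ctr_alg (u) (a : PA d) :
    S.ctr u (algebraMap (PA d) (FormAlg d) a) = 0 := by
  rw [Algebra.algebraMap_eq_smul_one, S.ctr_smul, S.ctr_one, smul_zero]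

lemma ctr_eD (u) (b : PA d) :
    S.ctr u (eD b) = algebraMap (PA d) (FormAlg d) (u b) := S.ctr_d u b

lemma ctr_mul_eD (u) (b : PA d) (y : FormAlg d) :
    S.ctr u (eD b * y) = (u b) • y - eD b * S.ctr u y := by
  rw [S.ctr_leib u 1 (eD b) y (eD_mem_deg1 b), S.ctr_eD, alg_mul_eq_smul,
    pow_one, neg_one_zsmul, ← sub_eq_add_neg]

lemma dR_eD (b : PA d) : S.dR (eD b) = 0 := by
  rw [show (eD b : FormAlg d) = S.dR (algebraMap (PA d) (FormAlg d) b) from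
    (S.dR_D b).symm, S.dR_sq]

lemma dR_mul_eD (b : PA d) (y : FormAlg d) :
    S.dR (eD b * y) = -(eD b * S.dR y) := by
  rw [S.dR_leib 1 (eD b) y (eD_mem_deg1 b), S.dR_eD, zero_mul, zero_add,
    pow_one, neg_one_zsmul]

lemma dR_smul (a : PA d) (y : FormAlg d) :
    S.dR (a • y) = eD a * y + a • S.dR y := by
  rw [← alg_mul_eq_smul, S.dR_leib 0 _ y (mem_deg0 a), S.dR_D, pow_zero,
    one_smul, alg_mul_eq_smul]
  rfl

/-- Contractions anticommute. -/
lemma ctr_ctr_anticomm (x : FormAlg d) (u v : DerA d) :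
    S.ctr u (S.ctr v x) + S.ctr v (S.ctr u x) = 0 := by
  have main : ∀ n (y : FormAlg d), y ∈ ⋀[PA d]^n (KD d) →
      (∀ u v : DerA d, S.ctr u (S.ctr v y) + S.ctr v (S.ctr u y) = 0) := by
    refine homog_ind _ ?_ ?_ ?_ ?_ ?_
    · intro a u v
      rw [S.ctr_alg, S.ctr_alg, S.ctr_zero, S.ctr_zero, add_zero]
    · intro n u v
      simp only [S.ctr_zero, add_zero]
    · intro n x y hx hy u v
      simp only [S.ctr_add]
      rw [add_add_add_comm, hx u v, hy u v, add_zero]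
    · intro n a x hx u v
      simp only [S.ctr_smul, ← smul_add]
      rw [hx u v, smul_zero]
    · intro n b y _ IH u v
      have h4 : S.ctr v (S.ctr u y) = - S.ctr u (S.ctr v y) :=
        eq_neg_of_add_eq_zero_left (by rw [add_comm]; exact IH u v)
      rw [S.ctr_mul_eD v b y, S.ctr_sub, S.ctr_smul, S.ctr_mul_eD,
        S.ctr_mul_eD u b y, S.ctr_sub, S.ctr_smul, S.ctr_mul_eD, h4, mul_neg]
      abel
  refine global (fun y => ∀ u v : DerA d,
      S.ctr u (S.ctr v y) + S.ctr v (S.ctr u y) = 0) ?_ ?_ main x u v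
  · intro u v; simp only [S.ctr_zero, add_zero]
  · intro a b ha hb u v
    simp only [S.ctr_add]
    rw [add_add_add_comm, ha u v, hb u v, add_zero]

/-- The Cartan commutation relation `[L¹_u, ι_v] = ι_{[u,v]}`. -/
lemma cartan (x : FormAlg d) (u v : DerA d) :
    S.dR (S.ctr u (S.ctr v x)) + S.ctr u (S.dR (S.ctr v x))
      - S.ctr v (S.dR (S.ctr u x)) - S.ctr v (S.ctr u (S.dR x))
    = S.ctr ⁅u,v⁆ x := by
  have main : ∀ n (y : FormAlg d), y ∈ ⋀[PA d]^n (KD d) →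
      (∀ u v : DerA d,
        S.dR (S.ctr u (S.ctr v y)) + S.ctr u (S.dR (S.ctr v y))
          - S.ctr v (S.dR (S.ctr u y)) - S.ctr v (S.ctr u (S.dR y))
        = S.ctr ⁅u,v⁆ y) := by
    refine homog_ind _ ?_ ?_ ?_ ?_ ?_
    · intro a u v
      simp [S.ctr_alg, S.ctr_zero, S.dR_zero, S.dR_D, S.ctr_d]
    · intro n u v
      simp only [S.ctr_zero, S.dR_zero, add_zero, sub_zero]
    · intro n x y hx hy u v
      simp only [S.ctr_add, S.dR_add]
      rw [← hx u v, ← hy u v]; abel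
    · intro n a x hx u v
      simp only [S.ctr_smul, S.dR_smul, S.ctr_add, S.ctr_sub, S.ctr_mul_eD,
        S.ctr_smul, smul_add, smul_sub]
      rw [← hx u v]
      simp only [smul_add, smul_sub]
      abel
    · intro n b y _ IH u v
      simp only [S.ctr_mul_eD, S.dR_mul_eD, S.ctr_sub, S.dR_sub, S.ctr_neg,
        S.dR_neg, S.ctr_smul, S.dR_smul, S.ctr_add, S.dR_add, mul_sub, mul_add,
        mul_neg, smul_sub, smul_add, Derivation.commutator_apply, sub_smul]
      rw [← IH u v]
      simp only [mul_sub, mul_add, mul_neg]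
      abel
  refine global (fun y => ∀ u v : DerA d,
      S.dR (S.ctr u (S.ctr v y)) + S.ctr u (S.dR (S.ctr v y))
        - S.ctr v (S.dR (S.ctr u y)) - S.ctr v (S.ctr u (S.dR y))
      = S.ctr ⁅u,v⁆ y) ?_ ?_ main x u v
  · intro u v
    simp only [S.ctr_zero, S.dR_zero, add_zero, sub_zero]
  · intro a b ha hb u v
    simp only [S.ctr_add, S.dR_add]
    rw [← ha u v, ← hb u v]; abel

end Setup
end CartanAux
namespace CartanAux

lemma sign_succ_smul {M : Type*} [AddCommGroup M] (n : ℕ) (z : M) :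
    ((-1 : ℤ) ^ (n+1)) • z = -(((-1 : ℤ) ^ n) • z) := by
  rw [pow_succ, mul_comm, mul_smul, neg_one_zsmul]

lemma sign_sign_smul {M : Type*} [AddCommGroup M] (n : ℕ) (z : M) :
    ((-1 : ℤ) ^ n) • ((-1 : ℤ) ^ n) • z = z := by
  rw [smul_smul, ← pow_add, Even.neg_one_pow ⟨n, rfl⟩, one_smul]

lemma sign_cases (n : ℕ) :
    ((-1 : ℤ) ^ n = 1 ∧ (-1 : ℤ) ^ (n+1) = -1) ∨
    ((-1 : ℤ) ^ n = -1 ∧ (-1 : ℤ) ^ (n+1) = 1) := by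
  rcases Nat.even_or_odd n with h | h
  · exact Or.inl ⟨h.neg_one_pow, by rw [pow_succ, h.neg_one_pow, one_mul]⟩
  · exact Or.inr ⟨h.neg_one_pow, by rw [pow_succ, h.neg_one_pow]; norm_num⟩

namespace Setup

variable {d : ℕ} (S : Setup d)

/-- Iterated contraction along a list of derivations. -/
noncomputable def Cl : List (DerA d) → FormAlg d → FormAlg d
  | [], x => x
  | u :: l, x => S.ctr u (Cl l x)

@[simp] lemma Cl_nil (x : FormAlg d) : S.Cl [] x = x := rfl
@[simp] lemma Cl_cons (u : DerA d) (l : List (DerA d)) (x : FormAlg d) :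
    S.Cl (u :: l) x = S.ctr u (S.Cl l x) := rfl

lemma Cl_append (l₁ l₂ : List (DerA d)) (x : FormAlg d) :
    S.Cl (l₁ ++ l₂) x = S.Cl l₁ (S.Cl l₂ x) := by
  induction l₁ with
  | nil => rfl
  | cons u l ih => simp [ih]

lemma Cl_add (l : List (DerA d)) (x y : FormAlg d) :
    S.Cl l (x + y) = S.Cl l x + S.Cl l y := by
  induction l with
  | nil => rfl
  | cons u l ih => simp [ih, S.ctr_add]

lemma Cl_zero (l : List (DerA d)) : S.Cl l 0 = 0 := map_zero' (S.Cl_add l)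
lemma Cl_sub (l : List (DerA d)) (x y) : S.Cl l (x - y) = S.Cl l x - S.Cl l y :=
  map_sub' (S.Cl_add l) x y
lemma Cl_zsmul (l : List (DerA d)) (c : ℤ) (x) : S.Cl l (c • x) = c • S.Cl l x :=
  map_zsmul' (S.Cl_add l) c x

lemma ctr_ctr_neg (u v : DerA d) (z : FormAlg d) :
    S.ctr u (S.ctr v z) = - S.ctr v (S.ctr u z) :=
  eq_neg_of_add_eq_zero_left (S.ctr_ctr_anticomm z u v)

/-- Contractions anticommute past iterated contractions. -/
lemma Cl_ctr_swap (l : List (DerA d)) (v : DerA d) (x : FormAlg d) :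
    S.Cl l (S.ctr v x) = ((-1 : ℤ) ^ l.length) • S.ctr v (S.Cl l x) := by
  induction l with
  | nil => simp
  | cons u l ih =>
    rw [Cl_cons, ih, S.ctr_zsmul, S.ctr_ctr_neg, smul_neg, List.length_cons,
      sign_succ_smul, Cl_cons]

lemma ctr_Cl_swap (l : List (DerA d)) (v : DerA d) (x : FormAlg d) :
    S.ctr v (S.Cl l x) = ((-1 : ℤ) ^ l.length) • S.Cl l (S.ctr v x) := by
  rw [S.Cl_ctr_swap, sign_sign_smul]

/-- The Lie derivative along a list of derivations, with explicit sign
exponent `k` (to be used with `l.length = k + 1`). -/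
noncomputable def Lk (k : ℕ) (l : List (DerA d)) (x : FormAlg d) : FormAlg d :=
  S.dR (S.Cl l x) + ((-1 : ℤ) ^ k) • S.Cl l (S.dR x)

lemma Lk_add (k : ℕ) (l : List (DerA d)) (x y : FormAlg d) :
    S.Lk k l (x + y) = S.Lk k l x + S.Lk k l y := by
  simp only [Lk, S.Cl_add, S.dR_add, smul_add]; abel

lemma Lk_zsmul (k : ℕ) (l : List (DerA d)) (c : ℤ) (x : FormAlg d) :
    S.Lk k l (c • x) = c • S.Lk k l x :=
  map_zsmul' (S.Lk_add k l) c x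

/-- `d ∘ L = (-1)^k • L ∘ d`. -/
lemma dR_Lk (k : ℕ) (l : List (DerA d)) (x : FormAlg d) :
    S.dR (S.Lk k l x) = ((-1 : ℤ) ^ k) • S.Lk k l (S.dR x) := by
  simp only [Lk, S.dR_add, S.dR_zsmul, S.dR_sq, S.Cl_zero, smul_zero,
    smul_add, add_zero, zero_add, smul_smul, ← pow_add]

lemma Lk_dR (k : ℕ) (l : List (DerA d)) (x : FormAlg d) :
    S.Lk k l (S.dR x) = ((-1 : ℤ) ^ k) • S.dR (S.Lk k l x) := by
  rw [S.dR_Lk, sign_sign_smul]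

/-- The sum `∑ (-1)^i ι_{[l_i, v]} ∘ i_{l \ i}`. -/
noncomputable def BLsum (l : List (DerA d)) (v : DerA d) (x : FormAlg d) : FormAlg d :=
  ∑ i ∈ Finset.range l.length,
    ((-1 : ℤ) ^ i) • S.ctr ⁅l.getD i 0, v⁆ (S.Cl (l.eraseIdx i) x)

lemma Lk_rec (u w : DerA d) (m : List (DerA d)) (x : FormAlg d) :
    S.Lk (m.length + 1) (u :: w :: m) x
      = (S.dR (S.ctr u (S.Cl (w :: m) x)) + S.ctr u (S.dR (S.Cl (w :: m) x)))
        - S.ctr u (S.Lk m.length (w :: m) x) := by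
  simp only [Lk, Cl_cons, S.ctr_add, S.ctr_zsmul, sign_succ_smul]
  abel

end Setup
end CartanAux
namespace CartanAux
namespace Setup

variable {d : ℕ} (S : Setup d)

lemma BL (l : List (DerA d)) : ∀ (u v : DerA d) (x : FormAlg d),
    S.Lk l.length (u :: l) (S.ctr v x)
      - ((-1 : ℤ) ^ l.length) • S.ctr v (S.Lk l.length (u :: l) x)
    = ((-1 : ℤ) ^ l.length) • S.BLsum (u :: l) v x := by
  induction l with
  | nil =>
    intro u v x
    simp only [List.length_nil, pow_zero, one_smul, BLsum, List.length_cons,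
      Finset.sum_range_one, List.getD_cons_zero, List.eraseIdx_cons_zero,
      Lk, Cl_cons, Cl_nil, Finset.range_one, zero_add]
    simp only [S.ctr_add, pow_zero, one_smul, Finset.sum_singleton,
      List.getD_cons_zero, List.eraseIdx_cons_zero, Cl_nil]
    rw [← S.cartan x u v]
    abel
  | cons w m ih =>
    intro u v x
    simp only [List.length_cons]
    have hanti : ∀ z, S.ctr u (S.ctr v z) = - S.ctr v (S.ctr u z) :=
      fun z => S.ctr_ctr_neg u v z
    have hswap' : S.Cl (w :: m) (S.ctr v x)
        = ((-1 : ℤ) ^ (m.length + 1)) • S.ctr v (S.Cl (w :: m) x) := by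
      rw [S.Cl_ctr_swap, List.length_cons]
    have hIH : S.Lk m.length (w :: m) (S.ctr v x)
        = ((-1 : ℤ) ^ m.length) • S.BLsum (w :: m) v x
          + ((-1 : ℤ) ^ m.length) • S.ctr v (S.Lk m.length (w :: m) x) :=
      sub_eq_iff_eq_add.mp (ih w v x)
    have hcuB : S.ctr u (S.BLsum (w :: m) v x)
        = - ∑ i ∈ Finset.range (m.length + 1), ((-1 : ℤ) ^ i) •
            S.ctr ⁅(w :: m).getD i 0, v⁆
              (S.ctr u (S.Cl ((w :: m).eraseIdx i) x)) := by
      rw [BLsum, map_finsum (S.ctr_add u), ← Finset.sum_neg_distrib]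
      simp only [List.length_cons]
      refine Finset.sum_congr rfl fun i _ => ?_
      rw [S.ctr_zsmul, S.ctr_ctr_neg, smul_neg]
    have hBcons : S.BLsum (u :: w :: m) v x = S.ctr ⁅u, v⁆ (S.Cl (w :: m) x)
        + ∑ i ∈ Finset.range (m.length + 1), ((-1 : ℤ) ^ (i + 1)) •
            S.ctr ⁅(w :: m).getD i 0, v⁆
              (S.ctr u (S.Cl ((w :: m).eraseIdx i) x)) := by
      rw [BLsum]
      simp only [List.length_cons]
      rw [Finset.sum_range_succ']
      simp only [List.getD_cons_succ, List.eraseIdx_cons_succ,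
        List.getD_cons_zero, List.eraseIdx_cons_zero, Cl_cons, pow_zero, one_smul]
      rw [add_comm]
    have hS2 : (∑ i ∈ Finset.range (m.length + 1), ((-1 : ℤ) ^ (i + 1)) •
            S.ctr ⁅(w :: m).getD i 0, v⁆
              (S.ctr u (S.Cl ((w :: m).eraseIdx i) x)))
        = - ∑ i ∈ Finset.range (m.length + 1), ((-1 : ℤ) ^ i) •
            S.ctr ⁅(w :: m).getD i 0, v⁆
              (S.ctr u (S.Cl ((w :: m).eraseIdx i) x)) := by
      rw [← Finset.sum_neg_distrib]
      exact Finset.sum_congr rfl fun i _ => sign_succ_smul i _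
    rw [S.Lk_rec u w m (S.ctr v x), S.Lk_rec u w m x, hswap', hIH, hBcons, hS2]
    simp only [S.ctr_add, S.ctr_sub, S.ctr_zsmul, S.dR_zsmul, S.ctr_neg,
      S.dR_neg, smul_add, smul_neg, smul_sub]
    rw [hcuB, hanti (S.Lk m.length (w :: m) x), ← S.cartan (S.Cl (w :: m) x) u v]
    simp only [smul_add, smul_sub, smul_neg]
    rcases sign_cases m.length with ⟨h1, h2⟩ | ⟨h1, h2⟩ <;>
      simp only [h1, h2, one_smul, neg_one_zsmul, neg_neg] <;> abel

end Setup
end CartanAux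
namespace CartanAux

lemma sign_pm (n : ℕ) : (-1 : ℤ) ^ n = 1 ∨ (-1 : ℤ) ^ n = -1 := by
  rcases Nat.even_or_odd n with h | h
  · exact Or.inl h.neg_one_pow
  · exact Or.inr h.neg_one_pow

namespace Setup

variable {d : ℕ} (S : Setup d)

/-- The contraction against the Schouten–Nijenhuis-type double sum. -/
noncomputable def MLsum (l m' : List (DerA d)) (x : FormAlg d) : FormAlg d :=
  ∑ i ∈ Finset.range l.length, ∑ j ∈ Finset.range m'.length,
    ((-1 : ℤ) ^ (i + j)) • S.ctr ⁅l.getD i 0, m'.getD j 0⁆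
      (S.Cl (l.eraseIdx i) (S.Cl (m'.eraseIdx j) x))

lemma ML (m' : List (DerA d)) : ∀ (u : DerA d) (l₀ : List (DerA d)) (x : FormAlg d),
    S.Lk l₀.length (u :: l₀) (S.Cl m' x)
      - ((-1 : ℤ) ^ (l₀.length * m'.length)) • S.Cl m' (S.Lk l₀.length (u :: l₀) x)
    = ((-1 : ℤ) ^ l₀.length) • S.MLsum (u :: l₀) m' x := by
  induction m' with
  | nil =>
    intro u l₀ x
    simp [MLsum]
  | cons v m ih =>
    intro u l₀ x
    have hlen : ∀ i ∈ Finset.range (l₀.length + 1),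
        (((u :: l₀).eraseIdx i).length) = l₀.length := by
      intro i hi
      rw [List.length_eraseIdx]
      simp only [List.length_cons]
      rw [if_pos (Finset.mem_range.mp hi)]
      omega
    have hBL : S.Lk l₀.length (u :: l₀) (S.ctr v (S.Cl m x))
        = ((-1 : ℤ) ^ l₀.length) • S.BLsum (u :: l₀) v (S.Cl m x)
          + ((-1 : ℤ) ^ l₀.length) • S.ctr v (S.Lk l₀.length (u :: l₀) (S.Cl m x)) :=
      sub_eq_iff_eq_add.mp (S.BL l₀ u v (S.Cl m x))
    have hIH : S.Lk l₀.length (u :: l₀) (S.Cl m x)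
        = ((-1 : ℤ) ^ l₀.length) • S.MLsum (u :: l₀) m x
          + ((-1 : ℤ) ^ (l₀.length * m.length)) • S.Cl m (S.Lk l₀.length (u :: l₀) x) :=
      sub_eq_iff_eq_add.mp (ih u l₀ x)
    have hswapML : S.ctr v (S.MLsum (u :: l₀) m x)
        = (-((-1 : ℤ) ^ l₀.length)) •
            ∑ i ∈ Finset.range (l₀.length + 1), ∑ j ∈ Finset.range m.length,
              ((-1 : ℤ) ^ (i + j)) • S.ctr ⁅(u :: l₀).getD i 0, m.getD j 0⁆
                (S.Cl ((u :: l₀).eraseIdx i) (S.ctr v (S.Cl (m.eraseIdx j) x))) := by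
      rw [MLsum, Finset.smul_sum]
      simp only [List.length_cons]
      rw [map_finsum (S.ctr_add v)]
      refine Finset.sum_congr rfl fun i hi => ?_
      rw [Finset.smul_sum, map_finsum (S.ctr_add v)]
      refine Finset.sum_congr rfl fun j _ => ?_
      rw [S.ctr_zsmul, S.ctr_ctr_neg, S.ctr_Cl_swap, hlen i hi, S.ctr_zsmul]
      module
    have hMLcons : S.MLsum (u :: l₀) (v :: m) x = S.BLsum (u :: l₀) v (S.Cl m x)
        + ∑ i ∈ Finset.range (l₀.length + 1), ∑ j ∈ Finset.range m.length,
            ((-1 : ℤ) ^ (i + (j + 1))) • S.ctr ⁅(u :: l₀).getD i 0, m.getD j 0⁆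
              (S.Cl ((u :: l₀).eraseIdx i) (S.ctr v (S.Cl (m.eraseIdx j) x))) := by
      rw [MLsum, BLsum]
      simp only [List.length_cons]
      rw [← Finset.sum_add_distrib]
      refine Finset.sum_congr rfl fun i _ => ?_
      rw [Finset.sum_range_succ']
      simp only [List.getD_cons_succ, List.getD_cons_zero, List.eraseIdx_cons_succ,
        List.eraseIdx_cons_zero, Cl_cons, add_zero]
      rw [add_comm]
    have hS2 : (∑ i ∈ Finset.range (l₀.length + 1), ∑ j ∈ Finset.range m.length,
            ((-1 : ℤ) ^ (i + (j + 1))) • S.ctr ⁅(u :: l₀).getD i 0, m.getD j 0⁆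
              (S.Cl ((u :: l₀).eraseIdx i) (S.ctr v (S.Cl (m.eraseIdx j) x))))
        = - ∑ i ∈ Finset.range (l₀.length + 1), ∑ j ∈ Finset.range m.length,
            ((-1 : ℤ) ^ (i + j)) • S.ctr ⁅(u :: l₀).getD i 0, m.getD j 0⁆
              (S.Cl ((u :: l₀).eraseIdx i) (S.ctr v (S.Cl (m.eraseIdx j) x))) := by
      rw [← Finset.sum_neg_distrib]
      refine Finset.sum_congr rfl fun i _ => ?_
      rw [← Finset.sum_neg_distrib]
      refine Finset.sum_congr rfl fun j _ => ?_
      rw [← add_assoc, sign_succ_smul]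
    simp only [List.length_cons, Cl_cons]
    rw [hBL, hIH, hMLcons]
    simp only [S.ctr_add, S.ctr_zsmul, smul_add]
    rw [hswapML, hS2]
    have e1 : ((-1 : ℤ)) ^ (l₀.length * (m.length + 1))
        = (-1 : ℤ) ^ (l₀.length * m.length) * (-1 : ℤ) ^ l₀.length := by
      rw [Nat.mul_succ, pow_add]
    rw [e1]
    rcases sign_pm l₀.length with h1 | h1 <;>
      rcases sign_pm (l₀.length * m.length) with h2 | h2 <;>
        simp only [h1, h2, one_smul, neg_one_zsmul, one_mul, mul_one, neg_neg,
          smul_neg, neg_smul, mul_neg] <;>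
        abel

end Setup
end CartanAux
namespace CartanAux
namespace Setup

variable {d : ℕ} (S : Setup d)

lemma main_lists (k₂ : ℕ) (u : DerA d) (l₀ m : List (DerA d))
    (hm : m.length = k₂ + 1) (x : FormAlg d) :
    S.Lk l₀.length (u :: l₀) (S.Lk k₂ m x)
      - ((-1 : ℤ) ^ (l₀.length * k₂)) • S.Lk k₂ m (S.Lk l₀.length (u :: l₀) x)
    = S.dR (S.MLsum (u :: l₀) m x)
      + ((-1 : ℤ) ^ (l₀.length + k₂)) • S.MLsum (u :: l₀) m (S.dR x) := by
  have hML : ∀ z, S.Lk l₀.length (u :: l₀) (S.Cl m z)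
      = ((-1 : ℤ) ^ l₀.length) • S.MLsum (u :: l₀) m z
        + ((-1 : ℤ) ^ (l₀.length * m.length)) • S.Cl m (S.Lk l₀.length (u :: l₀) z) :=
    fun z => sub_eq_iff_eq_add.mp (S.ML m u l₀ z)
  have e0' : ∀ z, S.Lk k₂ m z
      = S.dR (S.Cl m z) + ((-1 : ℤ) ^ k₂) • S.Cl m (S.dR z) := fun _ => rfl
  rw [e0' x, S.Lk_add, S.Lk_zsmul, S.Lk_dR l₀.length (u :: l₀) (S.Cl m x),
    hML x, hML (S.dR x), e0' (S.Lk l₀.length (u :: l₀) x),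
    S.dR_Lk l₀.length (u :: l₀) x]
  simp only [S.dR_add, S.dR_zsmul, S.Cl_add, S.Cl_zsmul, smul_add]
  rw [hm]
  have e1 : ((-1 : ℤ)) ^ (l₀.length * (k₂ + 1))
      = (-1 : ℤ) ^ (l₀.length * k₂) * (-1 : ℤ) ^ l₀.length := by
    rw [Nat.mul_succ, pow_add]
  have e2 : ((-1 : ℤ)) ^ (l₀.length + k₂)
      = (-1 : ℤ) ^ l₀.length * (-1 : ℤ) ^ k₂ := pow_add _ _ _
  rw [e1, e2]
  rcases sign_pm l₀.length with h1 | h1 <;>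
    rcases sign_pm k₂ with h2 | h2 <;>
      rcases sign_pm (l₀.length * k₂) with h3 | h3 <;>
        simp only [h1, h2, h3, one_mul, mul_one, neg_mul, mul_neg, neg_neg,
          one_smul, neg_one_zsmul, smul_neg, neg_smul] <;>
        abel

end Setup
end CartanAux
namespace CartanAux

variable {d : ℕ}

lemma polyvec_decomp (k : ℕ) (γ : PolyVec d (k+1)) :
    ∃ L : List (Fin (k+1) → DerA d),
      γ = (L.map (fun u => wedgeDec (PA d) (DerA d) (k+1) u)).sum := by
  have hgen : ∀ x, x ∈ Submodule.span (PA d)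
      (Set.range (ExteriorAlgebra.ιMulti (PA d) (k+1) (M := DerA d))) →
      ∃ L : List (Fin (k+1) → DerA d),
        x = (L.map (fun u => ExteriorAlgebra.ιMulti (PA d) (k+1) u)).sum := by
    intro x hx
    induction hx using Submodule.span_induction with
    | mem x hx =>
      obtain ⟨u, rfl⟩ := hx
      exact ⟨[u], by simp⟩
    | zero => exact ⟨[], by simp⟩
    | add x y _ _ ihx ihy =>
      obtain ⟨L1, h1⟩ := ihx
      obtain ⟨L2, h2⟩ := ihy
      exact ⟨L1 ++ L2, by simp [h1, h2]⟩
    | smul a x _ ih =>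
      obtain ⟨L, hLx⟩ := ih
      refine ⟨L.map (fun u => Function.update u 0 (a • u 0)), ?_⟩
      rw [hLx, List.smul_sum, List.map_map, List.map_map]
      congr 1
      refine List.map_congr_left (fun u _ => ?_)
      show a • ExteriorAlgebra.ιMulti (PA d) (k+1) u
        = ExteriorAlgebra.ιMulti (PA d) (k+1) (Function.update u 0 (a • u 0))
      conv_lhs => rw [← Function.update_eq_self 0 u]
      exact ((ExteriorAlgebra.ιMulti (PA d) (k+1)).map_update_smul u 0 a (u 0)).symm
  obtain ⟨L, hL⟩ := hgen (γ : ExteriorAlgebra (PA d) (DerA d)) (by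
    rw [ExteriorAlgebra.ιMulti_span_fixedDegree]; exact γ.2)
  refine ⟨L, Subtype.ext ?_⟩
  rw [hL]
  clear hL
  have hco : ((List.map (fun u => wedgeDec (PA d) (DerA d) (k+1) u) L).sum :
      ExteriorAlgebra (PA d) (DerA d))
      = (List.map (Subtype.val ∘ (fun u => wedgeDec (PA d) (DerA d) (k+1) u)) L).sum := by
    induction L with
    | nil => rfl
    | cons a L ih =>
      rw [List.map_cons, List.map_cons, List.sum_cons, List.sum_cons,
        Submodule.coe_add, ih]
      rfl
  rw [hco]
  rfl

end CartanAux
namespace CartanAux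

variable {d : ℕ}

/-- Extend a `Fin m`-tuple of derivations to `ℕ` by zero. -/
noncomputable def extFin (m : ℕ) (u : Fin m → DerA d) : ℕ → DerA d :=
  fun n => if h : n < m then u ⟨n, h⟩ else 0

lemma extFin_spec (m : ℕ) (u : Fin m → DerA d) :
    (fun t : Fin m => extFin m u ↑t) = u :=
  funext fun t => dif_pos t.isLt

lemma extFin_lt {m n : ℕ} (u : Fin m → DerA d) (h : n < m) :
    extFin m u n = u ⟨n, h⟩ := dif_pos h

/-- The tuple appearing in the Schouten–Nijenhuis formula. -/
noncomputable def snW (k₁ k₂ i j : ℕ) (u' v' : ℕ → DerA d) : ℕ → DerA d :=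
  fun t =>
    if t = 0 then ⁅u' i, v' j⁆
    else if t < k₁ + 1 then
      (if t - 1 < i then u' (t - 1) else u' t)
    else
      (if t - (k₁ + 1) < j then v' (t - (k₁ + 1))
       else v' (t - (k₁ + 1) + 1))

lemma snW_list (k₁ k₂ i j : ℕ) (hi : i < k₁ + 1) (hj : j < k₂ + 1)
    (u : Fin (k₁+1) → DerA d) (v : Fin (k₂+1) → DerA d) :
    List.ofFn (fun t : Fin (k₁+k₂+1) =>
        snW k₁ k₂ i j (extFin (k₁+1) u) (extFin (k₂+1) v) ↑t)
    = ⁅(List.ofFn u).getD i 0, (List.ofFn v).getD j 0⁆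
        :: ((List.ofFn u).eraseIdx i ++ (List.ofFn v).eraseIdx j) := by
  have hlu : ((List.ofFn u).eraseIdx i).length = k₁ := by
    rw [List.length_eraseIdx]
    simp only [List.length_ofFn, if_pos hi]
    omega
  have hlv : ((List.ofFn v).eraseIdx j).length = k₂ := by
    rw [List.length_eraseIdx]
    simp only [List.length_ofFn, if_pos hj]
    omega
  apply List.ext_getElem
  · simp only [List.length_ofFn, List.length_cons, List.length_append, hlu, hlv] <;>
      omega
  intro t h1 h2
  simp only [List.length_ofFn] at h1
  rw [List.getElem_ofFn, List.getElem_cons]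
  simp only [snW]
  by_cases ht0 : t = 0
  · subst ht0
    rw [if_pos rfl, dif_pos rfl, extFin_lt u hi, extFin_lt v hj,
      List.getD_eq_getElem (List.ofFn u) 0 (by rw [List.length_ofFn]; exact hi),
      List.getD_eq_getElem (List.ofFn v) 0 (by rw [List.length_ofFn]; exact hj),
      List.getElem_ofFn, List.getElem_ofFn]
    all_goals exact rfl
  · rw [if_neg ht0, dif_neg ht0, List.getElem_append]
    by_cases htk : t < k₁ + 1
    · rw [if_pos htk, dif_pos (by rw [hlu]; omega), List.getElem_eraseIdx]
      by_cases hti : t - 1 < i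
      · rw [if_pos hti, dif_pos hti, extFin_lt u (by omega), List.getElem_ofFn]
        all_goals exact congrArg u (Fin.ext (by simp <;> omega))
      · rw [if_neg hti, dif_neg hti, extFin_lt u htk, List.getElem_ofFn]
        all_goals exact congrArg u (Fin.ext (by simp <;> omega))
    · rw [if_neg htk, dif_neg (by rw [hlu]; omega), List.getElem_eraseIdx]
      simp only [hlu]
      by_cases htj : t - (k₁ + 1) < j
      · rw [if_pos htj, dif_pos (by omega : t - 1 - k₁ < j),
          extFin_lt v (by omega), List.getElem_ofFn]
        all_goals exact congrArg v (Fin.ext (by simp <;> omega))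
      · rw [if_neg htj, dif_neg (by omega : ¬ t - 1 - k₁ < j),
          extFin_lt v (by omega), List.getElem_ofFn]
        all_goals exact congrArg v (Fin.ext (by simp <;> omega))

end CartanAux
namespace CartanAux

variable {M : Type*} [AddCommGroup M] {α β : Type*}

lemma lsum_add (L : List α) (f g : α → M) :
    (L.map (fun a => f a + g a)).sum = (L.map f).sum + (L.map g).sum := by
  induction L with
  | nil => simp
  | cons a L ih => simp only [List.map_cons, List.sum_cons, ih]; abel

lemma lsum_sub (L : List α) (f g : α → M) :
    (L.map (fun a => f a - g a)).sum = (L.map f).sum - (L.map g).sum := by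
  induction L with
  | nil => simp
  | cons a L ih => simp only [List.map_cons, List.sum_cons, ih]; abel

lemma lsum_smul (L : List α) (c : ℤ) (f : α → M) :
    (L.map (fun a => c • f a)).sum = c • (L.map f).sum := by
  induction L with
  | nil => simp
  | cons a L ih => simp only [List.map_cons, List.sum_cons, ih, smul_add]

lemma lsum_comm (L₁ : List α) (L₂ : List β) (F : α → β → M) :
    (L₁.map (fun a => (L₂.map (fun b => F a b)).sum)).sum
      = (L₂.map (fun b => (L₁.map (fun a => F a b)).sum)).sum := by
  induction L₁ with
  | nil => simp
  | cons a L ih =>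
    simp only [List.map_cons, List.sum_cons, ih, ← lsum_add]

end CartanAux
namespace CartanAux

lemma lsum_congr {M : Type*} [AddCommGroup M] {α : Type*} (L : List α)
    {f g : α → M} (h : ∀ a ∈ L, f a = g a) :
    (L.map f).sum = (L.map g).sum := congrArg List.sum (List.map_congr_left h)

namespace Setup

variable {d : ℕ} (S : Setup d)

lemma foldr_ctr (l : List (DerA d)) (z : FormAlg d) :
    (l.map S.ctr).foldr (fun f y => f y) z = S.Cl l z := by
  induction l with
  | nil => rfl
  | cons u l ih => simp only [List.map_cons, List.foldr_cons, ih, Cl_cons]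

lemma main_lists' (k₁ k₂ : ℕ) (l m : List (DerA d)) (hl : l.length = k₁ + 1)
    (hm : m.length = k₂ + 1) (x : FormAlg d) :
    S.Lk k₁ l (S.Lk k₂ m x) - ((-1 : ℤ) ^ (k₁ * k₂)) • S.Lk k₂ m (S.Lk k₁ l x)
    = S.dR (S.MLsum l m x) + ((-1 : ℤ) ^ (k₁ + k₂)) • S.MLsum l m (S.dR x) := by
  cases l with
  | nil => simp at hl
  | cons u l₀ =>
    have h0 : l₀.length = k₁ := by simpa using hl
    subst h0
    exact S.main_lists k₂ u l₀ m hm x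

end Setup
end CartanAux

open CartanAux

/-- Let `A = ℝ[x₁,…,x_d]`, `Ω¹ = Ω_{A/ℝ}`, `Ω^n = Λ^n_A Ω¹`, with the
de Rham differential `dR` (the unique square-zero graded-Leibniz extension of the
universal derivation), contractions `ι_u` with derivations (the `A`-linear odd
antiderivations with `ι_u(da) = u(a)`), contractions `i_γ` with polyvector fields
(extended `A`-linearly from `i_{u₀∧…∧u_k} = ι_{u₀}∘…∘ι_{u_k}`), Lie derivatives
`L_γ = d∘i_γ + (-1)^k i_γ∘d` for `γ ∈ Λ^{k+1}_A Der(A)`, and the Schouten–Nijenhuis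
bracket `[·,·]_SN` (biadditive, extending the commutator of derivations, with the
standard values on decomposables).  Then the assignment `γ ↦ L_γ` makes `Ω^•` a graded
Lie algebra module over the polyvector fields:
`L_{γ₁}∘L_{γ₂} - (-1)^{k₁k₂} L_{γ₂}∘L_{γ₁} = L_{[γ₁,γ₂]_SN}` as operators on `Ω^•`. -/
theorem lie_derivative_graded_module (d : ℕ)
    -- the de Rham differential
    (dR : FormAlg d → FormAlg d)
    (hdR_add : ∀ x y, dR (x + y) = dR x + dR y)
    (hdR_deg : ∀ (n : ℕ) (x : FormAlg d), x ∈ ⋀[PA d]^n (KD d) →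
      dR x ∈ ⋀[PA d]^(n+1) (KD d))
    (hdR_D : ∀ a : PA d, dR (algebraMap (PA d) (FormAlg d) a)
      = ExteriorAlgebra.ι (PA d) (KaehlerDifferential.D ℝ (PA d) a))
    (hdR_sq : ∀ x, dR (dR x) = 0)
    (hdR_leib : ∀ (n : ℕ) (x y : FormAlg d), x ∈ ⋀[PA d]^n (KD d) →
      dR (x * y) = dR x * y + ((-1 : ℤ) ^ n) • (x * dR y))
    -- contraction with a derivation
    (ctr : DerA d → FormAlg d → FormAlg d)
    (hctr_add : ∀ u x y, ctr u (x + y) = ctr u x + ctr u y)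
    (hctr_smul : ∀ u (a : PA d) x, ctr u (a • x) = a • ctr u x)
    (hctr_d : ∀ (u : DerA d) (a : PA d),
      ctr u (ExteriorAlgebra.ι (PA d) (KaehlerDifferential.D ℝ (PA d) a))
        = algebraMap (PA d) (FormAlg d) (u a))
    (hctr_leib : ∀ (u : DerA d) (n : ℕ) (x y : FormAlg d), x ∈ ⋀[PA d]^n (KD d) →
      ctr u (x * y) = ctr u x * y + ((-1 : ℤ) ^ n) • (x * ctr u y))
    -- contraction with a polyvector field
    (IP : ∀ m : ℕ, PolyVec d m → FormAlg d → FormAlg d)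
    (hIP_add : ∀ m γ γ' x, IP m (γ + γ') x = IP m γ x + IP m γ' x)
    (hIP_smul : ∀ m (a : PA d) γ x, IP m (a • γ) x = a • IP m γ x)
    (hIP_dec : ∀ (m : ℕ) (u : ℕ → DerA d) (x : FormAlg d),
      IP m (wedgeDec (PA d) (DerA d) m fun t : Fin m => u t) x
        = (List.ofFn fun t : Fin m => ctr (u t)).foldr (fun f y => f y) x)
    -- the Schouten--Nijenhuis bracket
    (k₁ k₂ : ℕ)
    (SN : PolyVec d (k₁+1) → PolyVec d (k₂+1) → PolyVec d (k₁+k₂+1))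
    (hSNadd₁ : ∀ x y z, SN (x + y) z = SN x z + SN y z)
    (hSNadd₂ : ∀ x y z, SN x (y + z) = SN x y + SN x z)
    (hSN : ∀ (u v : ℕ → DerA d),
      SN (wedgeDec (PA d) (DerA d) (k₁+1) fun t : Fin (k₁+1) => u t)
         (wedgeDec (PA d) (DerA d) (k₂+1) fun t : Fin (k₂+1) => v t)
        = ∑ i ∈ Finset.range (k₁+1), ∑ j ∈ Finset.range (k₂+1),
            ((-1 : ℤ) ^ (i + j)) •
              wedgeDec (PA d) (DerA d) (k₁+k₂+1)
                (fun t : Fin (k₁+k₂+1) =>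
                  if (t : ℕ) = 0 then ⁅u i, v j⁆
                  else if (t : ℕ) < k₁ + 1 then
                    (if (t : ℕ) - 1 < i then u ((t : ℕ) - 1) else u (t : ℕ))
                  else
                    (if (t : ℕ) - (k₁ + 1) < j then v ((t : ℕ) - (k₁ + 1))
                     else v ((t : ℕ) - (k₁ + 1) + 1))))
    (γ₁ : PolyVec d (k₁+1)) (γ₂ : PolyVec d (k₂+1)) (x : FormAlg d) :
    -- `L_{γ₁}(L_{γ₂} x) - (-1)^{k₁ k₂} L_{γ₂}(L_{γ₁} x) = L_{[γ₁,γ₂]_SN} x`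
    (fun y => dR (IP (k₁+1) γ₁ y) + ((-1 : ℤ) ^ k₁) • IP (k₁+1) γ₁ (dR y))
        ((fun y => dR (IP (k₂+1) γ₂ y) + ((-1 : ℤ) ^ k₂) • IP (k₂+1) γ₂ (dR y)) x)
      - ((-1 : ℤ) ^ (k₁ * k₂)) •
        (fun y => dR (IP (k₂+1) γ₂ y) + ((-1 : ℤ) ^ k₂) • IP (k₂+1) γ₂ (dR y))
          ((fun y => dR (IP (k₁+1) γ₁ y) + ((-1 : ℤ) ^ k₁) • IP (k₁+1) γ₁ (dR y)) x)
      = dR (IP (k₁+k₂+1) (SN γ₁ γ₂) x)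
        + ((-1 : ℤ) ^ (k₁ + k₂)) • IP (k₁+k₂+1) (SN γ₁ γ₂) (dR x) := by
  classical
  let S : Setup d :=
    { dR := dR, ctr := ctr, dR_add := hdR_add, dR_D := hdR_D, dR_sq := hdR_sq,
      dR_leib := hdR_leib, ctr_add := hctr_add, ctr_smul := hctr_smul,
      ctr_d := hctr_d, ctr_leib := hctr_leib }
  obtain ⟨L₁, hL₁⟩ := polyvec_decomp k₁ γ₁
  obtain ⟨L₂, hL₂⟩ := polyvec_decomp k₂ γ₂
  subst hL₁
  subst hL₂
  -- contraction against a single wedge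
  have hIP_w : ∀ (m : ℕ) (u : Fin m → DerA d) (z : FormAlg d),
      IP m (wedgeDec (PA d) (DerA d) m u) z = S.Cl (List.ofFn u) z := by
    intro m u z
    have h := hIP_dec m (extFin m u) z
    rw [extFin_spec m u] at h
    rw [h]
    have h2 : (List.ofFn fun t : Fin m => ctr (extFin m u ↑t))
        = (List.ofFn u).map S.ctr := by
      rw [List.map_ofFn]
      exact congrArg List.ofFn (funext fun t => by
        rw [extFin_lt u t.isLt]; rfl)
    rw [h2, S.foldr_ctr]
  have IPsum_list : ∀ (m : ℕ) (Lw : List (↥(PolyVec d m))) (z : FormAlg d),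
      IP m Lw.sum z = (Lw.map (fun γ => IP m γ z)).sum := by
    intro m Lw z
    have h := map_list_sum (AddMonoidHom.mk' (fun γ => IP m γ z)
      (fun a b => hIP_add m a b z)) Lw
    simpa only [AddMonoidHom.mk'_apply] using h
  have IPsum_fin : ∀ (m : ℕ) (s : Finset ℕ) (f : ℕ → ↥(PolyVec d m)) (z : FormAlg d),
      IP m (∑ i ∈ s, f i) z = ∑ i ∈ s, IP m (f i) z := by
    intro m s f z
    have h := map_sum (AddMonoidHom.mk' (fun γ => IP m γ z)
      (fun a b => hIP_add m a b z)) f s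
    simpa only [AddMonoidHom.mk'_apply] using h
  have IP_zsmul : ∀ (m : ℕ) (c : ℤ) (γ : ↥(PolyVec d m)) (z : FormAlg d),
      IP m (c • γ) z = c • IP m γ z := by
    intro m c γ z
    have h := map_zsmul (AddMonoidHom.mk' (fun γ => IP m γ z)
      (fun a b => hIP_add m a b z)) c γ
    simpa only [AddMonoidHom.mk'_apply] using h
  have SNsum₁ : ∀ (Lw : List (↥(PolyVec d (k₁+1)))) (γ : ↥(PolyVec d (k₂+1))),
      SN Lw.sum γ = (Lw.map (fun a => SN a γ)).sum := by
    intro Lw γ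
    have h := map_list_sum (AddMonoidHom.mk' (fun a => SN a γ)
      (fun a b => hSNadd₁ a b γ)) Lw
    simpa only [AddMonoidHom.mk'_apply] using h
  have SNsum₂ : ∀ (γ : ↥(PolyVec d (k₁+1))) (Lw : List (↥(PolyVec d (k₂+1)))),
      SN γ Lw.sum = (Lw.map (fun b => SN γ b)).sum := by
    intro γ Lw
    have h := map_list_sum (AddMonoidHom.mk' (fun b => SN γ b)
      (fun a b => hSNadd₂ γ a b)) Lw
    simpa only [AddMonoidHom.mk'_apply] using h
  -- contraction against a sum of wedges
  have hIPsum : ∀ (m : ℕ) (L : List (Fin m → DerA d)) (z : FormAlg d),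
      IP m ((L.map (fun u => wedgeDec (PA d) (DerA d) m u)).sum) z
        = (L.map (fun u => S.Cl (List.ofFn u) z)).sum := by
    intro m L z
    rw [IPsum_list m _ z, List.map_map]
    exact lsum_congr L (fun u _ => hIP_w m u z)
  -- Lie derivative of a sum of wedges
  have hL1op : ∀ z : FormAlg d,
      dR (IP (k₁+1) ((L₁.map (fun u => wedgeDec (PA d) (DerA d) (k₁+1) u)).sum) z)
        + ((-1 : ℤ) ^ k₁) •
          IP (k₁+1) ((L₁.map (fun u => wedgeDec (PA d) (DerA d) (k₁+1) u)).sum) (dR z)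
      = (L₁.map (fun u => S.Lk k₁ (List.ofFn u) z)).sum := by
    intro z
    rw [hIPsum, hIPsum, map_listsum hdR_add, List.map_map, ← lsum_smul, ← lsum_add]
    exact lsum_congr L₁ (fun u _ => rfl)
  have hL2op : ∀ z : FormAlg d,
      dR (IP (k₂+1) ((L₂.map (fun u => wedgeDec (PA d) (DerA d) (k₂+1) u)).sum) z)
        + ((-1 : ℤ) ^ k₂) •
          IP (k₂+1) ((L₂.map (fun u => wedgeDec (PA d) (DerA d) (k₂+1) u)).sum) (dR z)
      = (L₂.map (fun v => S.Lk k₂ (List.ofFn v) z)).sum := by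
    intro z
    rw [hIPsum, hIPsum, map_listsum hdR_add, List.map_map, ← lsum_smul, ← lsum_add]
    exact lsum_congr L₂ (fun v _ => rfl)
  -- contraction against the SN bracket of two wedges
  have hSN_w : ∀ (u : Fin (k₁+1) → DerA d) (v : Fin (k₂+1) → DerA d) (z : FormAlg d),
      IP (k₁+k₂+1) (SN (wedgeDec (PA d) (DerA d) (k₁+1) u)
          (wedgeDec (PA d) (DerA d) (k₂+1) v)) z
        = S.MLsum (List.ofFn u) (List.ofFn v) z := by
    intro u v z
    have h := hSN (extFin (k₁+1) u) (extFin (k₂+1) v)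
    rw [extFin_spec (k₁+1) u, extFin_spec (k₂+1) v] at h
    rw [h, IPsum_fin (k₁+k₂+1) _ _ z]
    rw [show S.MLsum (List.ofFn u) (List.ofFn v) z
      = ∑ i ∈ Finset.range (k₁+1), ∑ j ∈ Finset.range (k₂+1),
          ((-1 : ℤ) ^ (i + j)) • S.ctr ⁅(List.ofFn u).getD i 0, (List.ofFn v).getD j 0⁆
            (S.Cl ((List.ofFn u).eraseIdx i) (S.Cl ((List.ofFn v).eraseIdx j) z))
      from by rw [Setup.MLsum, List.length_ofFn, List.length_ofFn]]
    refine Finset.sum_congr rfl fun i hi => ?_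
    rw [IPsum_fin (k₁+k₂+1) _ _ z]
    refine Finset.sum_congr rfl fun j hj => ?_
    rw [IP_zsmul]
    congr 1
    have h3 := hIP_w (k₁+k₂+1)
      (fun t : Fin (k₁+k₂+1) => snW k₁ k₂ i j (extFin (k₁+1) u) (extFin (k₂+1) v) ↑t) z
    refine h3.trans ?_
    rw [snW_list k₁ k₂ i j (Finset.mem_range.mp hi) (Finset.mem_range.mp hj) u v,
      Setup.Cl_cons, Setup.Cl_append]
  -- the SN bracket of the two sums, contracted
  have hSNsum : ∀ z : FormAlg d,
      IP (k₁+k₂+1) (SN ((L₁.map (fun u => wedgeDec (PA d) (DerA d) (k₁+1) u)).sum)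
          ((L₂.map (fun v => wedgeDec (PA d) (DerA d) (k₂+1) v)).sum)) z
        = (L₁.map (fun u =>
            (L₂.map (fun v => S.MLsum (List.ofFn u) (List.ofFn v) z)).sum)).sum := by
    intro z
    rw [SNsum₁, List.map_map, IPsum_list (k₁+k₂+1) _ z, List.map_map]
    refine lsum_congr L₁ (fun u _ => ?_)
    show IP (k₁+k₂+1) (SN (wedgeDec (PA d) (DerA d) (k₁+1) u)
        ((L₂.map (fun v => wedgeDec (PA d) (DerA d) (k₂+1) v)).sum)) z = _
    rw [SNsum₂, List.map_map, IPsum_list (k₁+k₂+1) _ z, List.map_map]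
    exact lsum_congr L₂ (fun v _ => hSN_w u v z)
  -- now assemble
  show dR (IP (k₁+1) _ (dR (IP (k₂+1) _ x) + ((-1 : ℤ) ^ k₂) • IP (k₂+1) _ (dR x)))
      + ((-1 : ℤ) ^ k₁) • IP (k₁+1) _
          (dR (dR (IP (k₂+1) _ x) + ((-1 : ℤ) ^ k₂) • IP (k₂+1) _ (dR x)))
      - ((-1 : ℤ) ^ (k₁ * k₂)) •
        (dR (IP (k₂+1) _ (dR (IP (k₁+1) _ x) + ((-1 : ℤ) ^ k₁) • IP (k₁+1) _ (dR x)))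
          + ((-1 : ℤ) ^ k₂) • IP (k₂+1) _
              (dR (dR (IP (k₁+1) _ x) + ((-1 : ℤ) ^ k₁) • IP (k₁+1) _ (dR x))))
      = _
  rw [hL2op x, hL1op x]
  rw [hL1op ((L₂.map (fun v => S.Lk k₂ (List.ofFn v) x)).sum),
    hL2op ((L₁.map (fun u => S.Lk k₁ (List.ofFn u) x)).sum),
    hSNsum x, hSNsum (dR x)]
  -- push the outer Lie derivatives inside the list sums
  have hpush1 : (L₁.map (fun u => S.Lk k₁ (List.ofFn u)
        ((L₂.map (fun v => S.Lk k₂ (List.ofFn v) x)).sum))).sum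
      = (L₁.map (fun u => (L₂.map (fun v =>
          S.Lk k₁ (List.ofFn u) (S.Lk k₂ (List.ofFn v) x))).sum)).sum :=
    lsum_congr L₁ (fun u _ => by
      rw [map_listsum (S.Lk_add k₁ (List.ofFn u)), List.map_map]
      exact lsum_congr L₂ (fun v _ => rfl))
  have hpush2 : (L₂.map (fun v => S.Lk k₂ (List.ofFn v)
        ((L₁.map (fun u => S.Lk k₁ (List.ofFn u) x)).sum))).sum
      = (L₂.map (fun v => (L₁.map (fun u =>
          S.Lk k₂ (List.ofFn v) (S.Lk k₁ (List.ofFn u) x))).sum)).sum :=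
    lsum_congr L₂ (fun v _ => by
      rw [map_listsum (S.Lk_add k₂ (List.ofFn v)), List.map_map]
      exact lsum_congr L₁ (fun u _ => rfl))
  rw [hpush1, hpush2]
  rw [lsum_comm L₂ L₁ (fun v u => S.Lk k₂ (List.ofFn v) (S.Lk k₁ (List.ofFn u) x))]
  rw [map_listsum hdR_add, List.map_map, ← lsum_smul, ← lsum_smul, ← lsum_sub,
    ← lsum_add]
  refine lsum_congr L₁ (fun u _ => ?_)
  show (L₂.map (fun v => S.Lk k₁ (List.ofFn u) (S.Lk k₂ (List.ofFn v) x))).sum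
      - ((-1 : ℤ) ^ (k₁ * k₂)) •
        (L₂.map (fun v => S.Lk k₂ (List.ofFn v) (S.Lk k₁ (List.ofFn u) x))).sum
      = dR ((L₂.map (fun v => S.MLsum (List.ofFn u) (List.ofFn v) x)).sum)
        + ((-1 : ℤ) ^ (k₁ + k₂)) •
          (L₂.map (fun v => S.MLsum (List.ofFn u) (List.ofFn v) (dR x))).sum
  rw [map_listsum hdR_add, List.map_map, ← lsum_smul, ← lsum_smul, ← lsum_sub,
    ← lsum_add]
  refine lsum_congr L₂ (fun v _ => ?_)
  exact S.main_lists' k₁ k₂ (List.ofFn u) (List.ofFn v)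
    List.length_ofFn List.length_ofFn x
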